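/- arXiv:2209.04621 — 2 statements merged into one kernel-verified Lean document; each statement's English description precedes it below -/
import Mathlib

section
/- Let N ≥ 1, let Q be a real symmetric positive semidefinite d×d matrix, A ∈ ℝ^{d×d} with ‖A‖ ≤ α for some α > 0, B ∈ ℝ^{d×m}, and for each k ∈ {0,…,N−1} let S_k be a real symmetric positive definite m×m matrix. Define matrices P_N, P_{N−1}, …, P_0 backward by P_N = Q and P_k = AᵀP_{k+1}A + Q − AᵀP_{k+1}B (BᵀP_{k+1}B + S_k)^{−1} BᵀP_{k+1}A. Then every P_k is symmetric positive semidefinite, and for every p ∈ {0,…,N}, ‖P_{N−p}‖ ≤ ( Σ_{j=0}^{p} α^{2j} ) ‖Q‖, where ‖·‖ is the operator (spectral) norm induced by the Euclidean norm. -/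
open Finset Matrix

/-- The operator norm of a matrix induced by the Euclidean norms. -/
noncomputable def matNorm {d m : ℕ} (M : Matrix (Fin d) (Fin m) ℝ) : ℝ :=
  ‖LinearMap.toContinuousLinearMap (Matrix.toEuclideanLin M)‖

open scoped Matrix.Norms.L2Operator

lemma matNorm_eq {d m : ℕ} (M : Matrix (Fin d) (Fin m) ℝ) : matNorm M = ‖M‖ := rfl

lemma inner_toEuclideanLin {d : ℕ} (M : Matrix (Fin d) (Fin d) ℝ) (x : EuclideanSpace ℝ (Fin d)) :
    (inner ℝ x (LinearMap.toContinuousLinearMap (toEuclideanLin M) x) : ℝ)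
      = (WithLp.equiv 2 _ x) ⬝ᵥ (M *ᵥ (WithLp.equiv 2 _ x)) := by
  simp [PiLp.inner_apply, dotProduct, toEuclideanLin_apply, mul_comm]

open scoped MatrixOrder in
/-- Monotonicity of the L2 operator norm on PSD matrices. -/
lemma l2norm_mono {d : ℕ} {X Y : Matrix (Fin d) (Fin d) ℝ}
    (hX : X.PosSemidef) (hXY : (Y - X).PosSemidef) : ‖X‖ ≤ ‖Y‖ := by
  have rayleigh : ∀ x : EuclideanSpace ℝ (Fin d),
      (WithLp.equiv 2 _ x) ⬝ᵥ (X *ᵥ (WithLp.equiv 2 _ x)) ≤ ‖Y‖ * ‖x‖ ^ 2 := by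
    intro x
    set u := (WithLp.equiv 2 _ x : Fin d → ℝ)
    have h1 : u ⬝ᵥ (X *ᵥ u) ≤ u ⬝ᵥ (Y *ᵥ u) := by
      have := hXY.dotProduct_mulVec_nonneg u
      rw [star_trivial, sub_mulVec, dotProduct_sub] at this
      linarith
    have h2 : u ⬝ᵥ (Y *ᵥ u) = inner ℝ x (LinearMap.toContinuousLinearMap (toEuclideanLin Y) x) :=
      (inner_toEuclideanLin Y x).symm
    have h3 : (inner ℝ x (LinearMap.toContinuousLinearMap (toEuclideanLin Y) x) : ℝ)
        ≤ ‖Y‖ * ‖x‖ ^ 2 := by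
      calc (inner ℝ x (LinearMap.toContinuousLinearMap (toEuclideanLin Y) x) : ℝ)
          ≤ ‖x‖ * ‖LinearMap.toContinuousLinearMap (toEuclideanLin Y) x‖ := real_inner_le_norm _ _
        _ ≤ ‖x‖ * (‖Y‖ * ‖x‖) := by
            gcongr
            exact (LinearMap.toContinuousLinearMap (toEuclideanLin Y)).le_opNorm x
        _ = ‖Y‖ * ‖x‖ ^ 2 := by ring
    linarith
  set C := CFC.sqrt X with hCdef
  have hCps : C.PosSemidef := (CFC.sqrt_nonneg X).posSemidef
  have hCX : Cᴴ * C = X := by rw [hCps.isHermitian.eq]; exact CFC.sqrt_mul_sqrt_self X hX.nonneg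
  have hYnn : (0:ℝ) ≤ ‖Y‖ := norm_nonneg _
  have hC : ‖C‖ ≤ Real.sqrt ‖Y‖ := by
    have hCf : ‖C‖ = ‖LinearMap.toContinuousLinearMap (toEuclideanLin C)‖ := rfl
    rw [hCf]
    refine ContinuousLinearMap.opNorm_le_bound _ (Real.sqrt_nonneg _) fun x => ?_
    set f := LinearMap.toContinuousLinearMap (toEuclideanLin C)
    have hnorm : ‖f x‖ ^ 2 = (WithLp.equiv 2 _ x) ⬝ᵥ (X *ᵥ (WithLp.equiv 2 _ x)) := by
      rw [← real_inner_self_eq_norm_sq, ← hCX]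
      set u := (WithLp.equiv 2 _ x : Fin d → ℝ)
      have hfx : f x = (WithLp.equiv 2 (Fin d → ℝ)).symm (C *ᵥ u) := rfl
      have hct : Cᴴ = Cᵀ := conjTranspose_eq_transpose_of_trivial C
      rw [hct]
      have : (Cᵀ * C) *ᵥ u = Cᵀ *ᵥ (C *ᵥ u) := (mulVec_mulVec _ _ _).symm
      rw [this, dotProduct_mulVec, vecMul_transpose, hfx]
      simp [PiLp.inner_apply, dotProduct]
      rw [EuclideanSpace.norm_sq_eq]; simp [sq]
    have h4 : ‖f x‖ ^ 2 ≤ ‖Y‖ * ‖x‖ ^ 2 := hnorm ▸ rayleigh x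
    have h5 := Real.sqrt_le_sqrt h4
    rwa [Real.sqrt_sq (norm_nonneg _), Real.sqrt_mul hYnn, Real.sqrt_sq (norm_nonneg _)] at h5
  calc ‖X‖ = ‖Cᴴ * C‖ := by rw [hCX]
    _ = ‖C‖ * ‖C‖ := Matrix.l2_opNorm_conjTranspose_mul_self C
    _ ≤ Real.sqrt ‖Y‖ * Real.sqrt ‖Y‖ :=
        mul_le_mul hC hC (norm_nonneg _) (Real.sqrt_nonneg _)
    _ = ‖Y‖ := Real.mul_self_sqrt hYnn

/-- Completion of squares for the Riccati correction. -/
lemma riccati_sq {d m : ℕ} (P A : Matrix (Fin d) (Fin d) ℝ) (B : Matrix (Fin d) (Fin m) ℝ)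
    (S : Matrix (Fin m) (Fin m) ℝ) (hP : Pᵀ = P) (hSH : Sᵀ = S)
    (hM : IsUnit (Bᵀ * P * B + S)) :
    Aᵀ * P * A - Aᵀ * P * B * (Bᵀ * P * B + S)⁻¹ * (Bᵀ * P * A)
      = (A - B * ((Bᵀ * P * B + S)⁻¹ * (Bᵀ * P * A)))ᵀ * P
          * (A - B * ((Bᵀ * P * B + S)⁻¹ * (Bᵀ * P * A)))
        + ((Bᵀ * P * B + S)⁻¹ * (Bᵀ * P * A))ᵀ * S
          * ((Bᵀ * P * B + S)⁻¹ * (Bᵀ * P * A)) := by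
  set M := Bᵀ * P * B + S with hMdef
  set W := Bᵀ * P * A with hWdef
  set K := M⁻¹ * W with hKdef
  have hMT : Mᵀ = M := by
    rw [hMdef, transpose_add, hSH, transpose_mul, transpose_mul, transpose_transpose, hP,
      ← Matrix.mul_assoc]
  have hMiT : M⁻¹ᵀ = M⁻¹ := by rw [transpose_nonsing_inv, hMT]
  have hWT : Wᵀ = Aᵀ * P * B := by
    rw [hWdef, transpose_mul, transpose_mul, transpose_transpose, hP, ← Matrix.mul_assoc]
  have hKT : Kᵀ = Wᵀ * M⁻¹ := by rw [hKdef, transpose_mul, hMiT]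
  have hMK : M * K = W := by
    rw [hKdef, ← Matrix.mul_assoc, Matrix.mul_nonsing_inv _ (isUnit_iff_isUnit_det _ |>.1 hM),
      Matrix.one_mul]
  have hGT : (A - B * K)ᵀ = Aᵀ - Kᵀ * Bᵀ := by rw [transpose_sub, transpose_mul]
  have u2 : Bᵀ * (P * A) = W := by rw [hWdef, Matrix.mul_assoc]
  have u5 : Kᵀ * (Bᵀ * (P * (B * K))) + Kᵀ * (S * K) = Kᵀ * W := by
    have e1 : Bᵀ * (P * (B * K)) = (Bᵀ * P * B) * K := by simp only [Matrix.mul_assoc]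
    rw [e1, ← Matrix.mul_add, ← Matrix.add_mul, ← hMdef, hMK]
  rw [hGT]
  simp only [Matrix.sub_mul, Matrix.mul_sub, Matrix.mul_assoc]
  rw [u2, ← u5]
  abel

/-- the backward Riccati iterates are positive semidefinite and satisfy the
norm estimate `‖P_{N−p}‖ ≤ (∑_{j=0}^{p} α^{2j}) ‖Q‖` (equation (37)). -/
theorem stmt_8 {d m : ℕ} (N : ℕ) (hN : 1 ≤ N)
    (Q : Matrix (Fin d) (Fin d) ℝ) (hQ : Q.PosSemidef)
    (A : Matrix (Fin d) (Fin d) ℝ) (α : ℝ) (hα : 0 < α) (hA : matNorm A ≤ α)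
    (B : Matrix (Fin d) (Fin m) ℝ)
    (S : ℕ → Matrix (Fin m) (Fin m) ℝ) (hS : ∀ k, k < N → (S k).PosDef)
    (P : ℕ → Matrix (Fin d) (Fin d) ℝ)
    (hPN : P N = Q)
    (hPrec : ∀ k, k < N → P k = Aᵀ * P (k + 1) * A + Q
      - Aᵀ * P (k + 1) * B * (Bᵀ * P (k + 1) * B + S k)⁻¹ * (Bᵀ * P (k + 1) * A)) :
    (∀ k, k ≤ N → (P k).PosSemidef) ∧
    (∀ p, p ≤ N → matNorm (P (N - p)) ≤ (∑ j ∈ range (p + 1), α ^ (2 * j)) * matNorm Q) := by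
  have key : ∀ j, j ≤ N → (P (N - j)).PosSemidef ∧
      matNorm (P (N - j)) ≤ (∑ i ∈ range (j + 1), α ^ (2 * i)) * matNorm Q := by
    intro j
    induction j with
    | zero =>
      intro _
      rw [Nat.sub_zero, hPN]
      refine ⟨hQ, ?_⟩
      simp
    | succ j ih =>
      intro hj
      obtain ⟨hps, hbd⟩ := ih (Nat.le_of_succ_le hj)
      set k := N - (j + 1) with hkdef
      have hkN : k < N := by omega
      have hk1 : k + 1 = N - j := by omega
      set Pp := P (k + 1) with hPpdef
      have hPp : Pp.PosSemidef := by rw [hPpdef, hk1]; exact hps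
      have hPpbd : matNorm Pp ≤ (∑ i ∈ range (j + 1), α ^ (2 * i)) * matNorm Q := by
        rw [hPpdef, hk1]; exact hbd
      have hSk := hS k hkN
      have hPT : Ppᵀ = Pp := by
        have := hPp.isHermitian.eq
        rwa [conjTranspose_eq_transpose_of_trivial] at this
      have hST : (S k)ᵀ = S k := by
        have := hSk.isHermitian.eq
        rwa [conjTranspose_eq_transpose_of_trivial] at this
      -- M is positive definite, hence invertible
      have hBPB : (Bᵀ * Pp * B).PosSemidef := by
        have := hPp.conjTranspose_mul_mul_same B
        rwa [conjTranspose_eq_transpose_of_trivial] at this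
      have hMpd : (Bᵀ * Pp * B + S k).PosDef := Matrix.PosDef.posSemidef_add hBPB hSk
      have hMunit : IsUnit (Bᵀ * Pp * B + S k) := hMpd.isUnit
      set K := (Bᵀ * Pp * B + S k)⁻¹ * (Bᵀ * Pp * A) with hKdef
      have hrec := hPrec k hkN
      rw [← hPpdef] at hrec
      -- positive semidefiniteness of P k
      have hsplit : P k = Q + ((A - B * K)ᵀ * Pp * (A - B * K) + Kᵀ * S k * K) := by
        rw [hrec, ← riccati_sq Pp A B (S k) hPT hST hMunit]
        abel
      have hPkps : (P k).PosSemidef := by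
        rw [hsplit]
        refine hQ.add (Matrix.PosSemidef.add ?_ ?_)
        · have := hPp.conjTranspose_mul_mul_same (A - B * K)
          rwa [conjTranspose_eq_transpose_of_trivial] at this
        · have := hSk.posSemidef.conjTranspose_mul_mul_same K
          rwa [conjTranspose_eq_transpose_of_trivial] at this
      -- norm bound: P k ≤ AᵀPpA + Q in Loewner order
      have hdiffps : ((Aᵀ * Pp * A + Q) - P k).PosSemidef := by
        have hd : (Aᵀ * Pp * A + Q) - P k
            = Aᵀ * Pp * B * (Bᵀ * Pp * B + S k)⁻¹ * (Bᵀ * Pp * A) := by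
          rw [hrec]; abel
        rw [hd]
        have hWT : (Bᵀ * Pp * A)ᵀ = Aᵀ * Pp * B := by
          rw [transpose_mul, transpose_mul, transpose_transpose, hPT, ← Matrix.mul_assoc]
        have := hMpd.inv.posSemidef.conjTranspose_mul_mul_same (Bᵀ * Pp * A)
        rwa [conjTranspose_eq_transpose_of_trivial, hWT] at this
      have hYps : (Aᵀ * Pp * A + Q).PosSemidef := by
        refine Matrix.PosSemidef.add ?_ hQ
        have := hPp.conjTranspose_mul_mul_same A
        rwa [conjTranspose_eq_transpose_of_trivial] at this
      have hmono : matNorm (P k) ≤ matNorm (Aᵀ * Pp * A + Q) := by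
        rw [matNorm_eq, matNorm_eq]
        exact l2norm_mono hPkps hdiffps
      -- bound matNorm (AᵀPpA + Q)
      have hAT : matNorm Aᵀ = matNorm A := by
        rw [matNorm_eq, matNorm_eq, ← conjTranspose_eq_transpose_of_trivial A,
          Matrix.l2_opNorm_conjTranspose]
      have htri : matNorm (Aᵀ * Pp * A + Q) ≤ matNorm A * matNorm Pp * matNorm A + matNorm Q := by
        calc matNorm (Aᵀ * Pp * A + Q) ≤ matNorm (Aᵀ * Pp * A) + matNorm Q := by
              rw [matNorm_eq, matNorm_eq, matNorm_eq]; exact norm_add_le _ _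
          _ ≤ matNorm (Aᵀ * Pp) * matNorm A + matNorm Q := by
              rw [matNorm_eq, matNorm_eq, matNorm_eq, matNorm_eq]
              exact add_le_add (Matrix.l2_opNorm_mul _ _) le_rfl
          _ ≤ matNorm Aᵀ * matNorm Pp * matNorm A + matNorm Q := by
              have h1 : matNorm (Aᵀ * Pp) ≤ matNorm Aᵀ * matNorm Pp := by
                rw [matNorm_eq, matNorm_eq, matNorm_eq]; exact Matrix.l2_opNorm_mul _ _
              have h2 : (0:ℝ) ≤ matNorm A := by rw [matNorm_eq]; exact norm_nonneg _
              nlinarith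
          _ = matNorm A * matNorm Pp * matNorm A + matNorm Q := by rw [hAT]
      have hQnn : (0:ℝ) ≤ matNorm Q := by rw [matNorm_eq]; exact norm_nonneg _
      have hPpnn : (0:ℝ) ≤ matNorm Pp := by rw [matNorm_eq]; exact norm_nonneg _
      have hAnn : (0:ℝ) ≤ matNorm A := by rw [matNorm_eq]; exact norm_nonneg _
      have hstep : matNorm (P k) ≤ α ^ 2 * matNorm Pp + matNorm Q := by
        have haa : matNorm A * matNorm A * matNorm Pp ≤ α * α * matNorm Pp :=
          mul_le_mul_of_nonneg_right (mul_le_mul hA hA hAnn hα.le) hPpnn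
        have : matNorm A * matNorm Pp * matNorm A ≤ α ^ 2 * matNorm Pp := by nlinarith [haa]
        linarith [hmono, htri]
      -- sum manipulation
      have hsum : ∑ i ∈ range (j + 1 + 1), α ^ (2 * i)
          = α ^ 2 * ∑ i ∈ range (j + 1), α ^ (2 * i) + 1 := by
        rw [Finset.sum_range_succ']
        simp only [Nat.mul_zero, pow_zero]
        congr 1
        rw [Finset.mul_sum]
        refine Finset.sum_congr rfl fun i _ => ?_
        rw [← pow_add]
        ring_nf
      refine ⟨hPkps, ?_⟩
      rw [hsum]
      have h2 : (0:ℝ) ≤ α ^ 2 := sq_nonneg α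
      nlinarith [hstep, hPpbd, hQnn, mul_le_mul_of_nonneg_left hPpbd h2]
  constructor
  · intro k hk
    have := (key (N - k) (Nat.sub_le _ _)).1
    rwa [Nat.sub_sub_self hk] at this
  · intro p hp
    exact (key p hp).2
end

section
/- Fix n ≥ 1 and a horizon N ≥ 1. Let α, β, γ, ρ > 0 and δ_max > 0, and let C(0) > 0. For each i ∈ {1,…,n} let A_i ∈ ℝ^{d×d} with ‖A_i‖ ≤ α, B_i ∈ ℝ^{d×m} with ‖B_i‖ ≤ β, x_i(0) ∈ ℝ^d with ‖x_i(0)‖ ≤ γ, let P_i be a real symmetric positive semidefinite d×d matrix with ‖P_i‖ ≤ δ_max · Σ_{j=0}^{N−1} α^{2j}, let R_i be symmetric positive semidefinite, let H_i be symmetric, and let u_i ∈ ℝ^m with ‖u_i‖ ≤ √(C(0)/ρ). Suppose λ_0 = − (1/C(0)) Σ_{i=1}^{n} u_iᵀ B_iᵀ P_i A_i x_i(0) − (1/C(0)) Σ_{i=1}^{n} u_iᵀ ( B_iᵀ P_i B_i + R_i ) u_i. Then λ_0 ≤ (n / √(C(0) ρ)) · β γ δ_max · Σ_{t=1}^{N}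 α^{2t−1}. -/
open Finset Matrix
open scoped RealInnerProductSpace

lemma matNorm_nonneg {d m : ℕ} (M : Matrix (Fin d) (Fin m) ℝ) : 0 ≤ matNorm M :=
  norm_nonneg _

lemma matNorm_apply_le {d m : ℕ} (M : Matrix (Fin d) (Fin m) ℝ) (x : EuclideanSpace ℝ (Fin m)) :
    ‖Matrix.toEuclideanLin M x‖ ≤ matNorm M * ‖x‖ :=
  (LinearMap.toContinuousLinearMap (Matrix.toEuclideanLin M)).le_opNorm x

lemma toEuclideanLin_mul {d e m : ℕ} (M : Matrix (Fin d) (Fin e) ℝ)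
    (N : Matrix (Fin e) (Fin m) ℝ) (x : EuclideanSpace ℝ (Fin m)) :
    Matrix.toEuclideanLin (M * N) x = Matrix.toEuclideanLin M (Matrix.toEuclideanLin N x) := by
  simp [Matrix.toEuclideanLin_apply, Matrix.mulVec_mulVec]

lemma inner_transpose {d m : ℕ} (M : Matrix (Fin d) (Fin m) ℝ)
    (u : EuclideanSpace ℝ (Fin m)) (y : EuclideanSpace ℝ (Fin d)) :
    ⟪u, Matrix.toEuclideanLin Mᵀ y⟫ = ⟪Matrix.toEuclideanLin M u, y⟫ := by
  have : (Mᵀ : Matrix (Fin m) (Fin d) ℝ) = Mᴴ := by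
    ext i j; simp [Matrix.conjTranspose_apply]
  rw [this, Matrix.toEuclideanLin_conjTranspose_eq_adjoint, LinearMap.adjoint_inner_right]

lemma psd_inner_nonneg {m : ℕ} {M : Matrix (Fin m) (Fin m) ℝ} (hM : M.PosSemidef)
    (u : EuclideanSpace ℝ (Fin m)) : 0 ≤ ⟪u, Matrix.toEuclideanLin M u⟫ := by
  rw [EuclideanSpace.inner_eq_star_dotProduct]
  simpa [Matrix.toEuclideanLin_apply, dotProduct_comm] using hM.dotProduct_mulVec_nonneg (WithLp.equiv 2 (Fin m → ℝ) u)

/-- the initial-time price bound (equation (41)) in the proof of Theorem 3. -/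
theorem stmt_10 {d m : ℕ} (n N : ℕ) (hn : 1 ≤ n) (hN : 1 ≤ N)
    (α β γ ρ δmax : ℝ)
    (hα : 0 < α) (hβ : 0 < β) (hγ : 0 < γ) (hρ : 0 < ρ) (hδmax : 0 < δmax)
    (C0 : ℝ) (hC0 : 0 < C0)
    (A : Fin n → Matrix (Fin d) (Fin d) ℝ) (hA : ∀ i, matNorm (A i) ≤ α)
    (B : Fin n → Matrix (Fin d) (Fin m) ℝ) (hB : ∀ i, matNorm (B i) ≤ β)
    (x0 : Fin n → EuclideanSpace ℝ (Fin d)) (hx0 : ∀ i, ‖x0 i‖ ≤ γ)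
    (P : Fin n → Matrix (Fin d) (Fin d) ℝ) (hPsd : ∀ i, (P i).PosSemidef)
    (hPn : ∀ i, matNorm (P i) ≤ δmax * ∑ j ∈ range N, α ^ (2 * j))
    (R : Fin n → Matrix (Fin m) (Fin m) ℝ) (hR : ∀ i, (R i).PosSemidef)
    (H : Fin n → Matrix (Fin m) (Fin m) ℝ) (hH : ∀ i, (H i).IsHermitian)
    (u : Fin n → EuclideanSpace ℝ (Fin m)) (hu : ∀ i, ‖u i‖ ≤ Real.sqrt (C0 / ρ))
    (lam0 : ℝ)
    (hlam0 : lam0 = -(1 / C0) * ∑ i, ⟪u i, Matrix.toEuclideanLin ((B i)ᵀ * P i * A i) (x0 i)⟫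
      - (1 / C0) * ∑ i, ⟪u i, Matrix.toEuclideanLin ((B i)ᵀ * P i * B i + R i) (u i)⟫) :
    lam0 ≤ ((n : ℝ) / Real.sqrt (C0 * ρ)) * β * γ * δmax * ∑ t ∈ Icc 1 N, α ^ (2 * t - 1) := by
  set D : ℝ := ∑ j ∈ range N, α ^ (2 * j) with hD
  have hDpos : 0 < D := by
    apply Finset.sum_pos (fun j _ => by positivity)
    exact Finset.nonempty_range_iff.mpr (by omega)
  -- rewrite the Icc sum
  have hIcc : ∑ t ∈ Icc 1 N, α ^ (2 * t - 1) = α * D := by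
    rw [show Icc 1 N = Ico 1 (N + 1) by rfl, Finset.sum_Ico_eq_sum_range]
    simp only [Nat.add_sub_cancel]
    rw [hD, Finset.mul_sum]
    apply Finset.sum_congr rfl
    intro j _
    have : 2 * (1 + j) - 1 = 2 * j + 1 := by omega
    rw [this, pow_succ]
    ring
  -- second sum nonneg
  have hS2 : 0 ≤ ∑ i, ⟪u i, Matrix.toEuclideanLin ((B i)ᵀ * P i * B i + R i) (u i)⟫ := by
    apply Finset.sum_nonneg
    intro i _
    apply psd_inner_nonneg
    have h1 : ((B i)ᵀ * P i * B i).PosSemidef := by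
      have := (hPsd i).conjTranspose_mul_mul_same (B i)
      simpa [Matrix.conjTranspose_eq_transpose_of_trivial] using this
    exact h1.add (hR i)
  -- bound each term of first sum
  have hterm : ∀ i : Fin n, -⟪u i, Matrix.toEuclideanLin ((B i)ᵀ * P i * A i) (x0 i)⟫ ≤
      Real.sqrt (C0 / ρ) * β * γ * δmax * (α * D) := by
    intro i
    have h1 : ⟪u i, Matrix.toEuclideanLin ((B i)ᵀ * P i * A i) (x0 i)⟫
        = ⟪Matrix.toEuclideanLin (B i) (u i), Matrix.toEuclideanLin (P i * A i) (x0 i)⟫ := by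
      rw [show (B i)ᵀ * P i * A i = (B i)ᵀ * (P i * A i) by rw [Matrix.mul_assoc]]
      rw [toEuclideanLin_mul, inner_transpose]
    rw [h1]
    have h2 := abs_real_inner_le_norm (Matrix.toEuclideanLin (B i) (u i))
      (Matrix.toEuclideanLin (P i * A i) (x0 i))
    have h3 : ‖Matrix.toEuclideanLin (B i) (u i)‖ ≤ β * Real.sqrt (C0 / ρ) := by
      calc ‖Matrix.toEuclideanLin (B i) (u i)‖ ≤ matNorm (B i) * ‖u i‖ := matNorm_apply_le _ _
        _ ≤ β * Real.sqrt (C0 / ρ) :=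
          mul_le_mul (hB i) (hu i) (norm_nonneg _) hβ.le
    have h4 : ‖Matrix.toEuclideanLin (P i * A i) (x0 i)‖ ≤ δmax * D * (α * γ) := by
      calc ‖Matrix.toEuclideanLin (P i * A i) (x0 i)‖
          = ‖Matrix.toEuclideanLin (P i) (Matrix.toEuclideanLin (A i) (x0 i))‖ := by
            rw [toEuclideanLin_mul]
        _ ≤ matNorm (P i) * ‖Matrix.toEuclideanLin (A i) (x0 i)‖ := matNorm_apply_le _ _
        _ ≤ (δmax * D) * (α * γ) := by
            apply mul_le_mul (hPn i) ?_ (norm_nonneg _) (by positivity)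
            calc ‖Matrix.toEuclideanLin (A i) (x0 i)‖ ≤ matNorm (A i) * ‖x0 i‖ :=
                matNorm_apply_le _ _
              _ ≤ α * γ := mul_le_mul (hA i) (hx0 i) (norm_nonneg _) hα.le
        _ = δmax * D * (α * γ) := rfl
    have h5 : -⟪Matrix.toEuclideanLin (B i) (u i), Matrix.toEuclideanLin (P i * A i) (x0 i)⟫
        ≤ ‖Matrix.toEuclideanLin (B i) (u i)‖ * ‖Matrix.toEuclideanLin (P i * A i) (x0 i)‖ := by
      have := neg_abs_le (⟪Matrix.toEuclideanLin (B i) (u i),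
        Matrix.toEuclideanLin (P i * A i) (x0 i)⟫ : ℝ)
      linarith
    calc -⟪Matrix.toEuclideanLin (B i) (u i), Matrix.toEuclideanLin (P i * A i) (x0 i)⟫
        ≤ ‖Matrix.toEuclideanLin (B i) (u i)‖ * ‖Matrix.toEuclideanLin (P i * A i) (x0 i)‖ := h5
      _ ≤ (β * Real.sqrt (C0 / ρ)) * (δmax * D * (α * γ)) :=
          mul_le_mul h3 h4 (norm_nonneg _) (by positivity)
      _ = Real.sqrt (C0 / ρ) * β * γ * δmax * (α * D) := by ring
  have hS1 : -∑ i, ⟪u i, Matrix.toEuclideanLin ((B i)ᵀ * P i * A i) (x0 i)⟫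
      ≤ n * (Real.sqrt (C0 / ρ) * β * γ * δmax * (α * D)) := by
    rw [← Finset.sum_neg_distrib]
    calc ∑ i, -⟪u i, Matrix.toEuclideanLin ((B i)ᵀ * P i * A i) (x0 i)⟫
        ≤ ∑ _i : Fin n, Real.sqrt (C0 / ρ) * β * γ * δmax * (α * D) :=
          Finset.sum_le_sum (fun i _ => hterm i)
      _ = n * (Real.sqrt (C0 / ρ) * β * γ * δmax * (α * D)) := by
          simp [Finset.sum_const, nsmul_eq_mul]
  -- key sqrt identity
  have hkey : Real.sqrt (C0 / ρ) / C0 = 1 / Real.sqrt (C0 * ρ) := by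
    have hs : 0 < Real.sqrt (C0 * ρ) := Real.sqrt_pos.mpr (by positivity)
    rw [div_eq_div_iff hC0.ne' hs.ne', one_mul]
    rw [← Real.sqrt_mul (by positivity)]
    rw [show C0 / ρ * (C0 * ρ) = C0 ^ 2 by field_simp]
    exact Real.sqrt_sq hC0.le
  rw [hlam0, hIcc]
  have hle : lam0 ≤ lam0 := le_refl _
  have h6 : -(1 / C0) * ∑ i, ⟪u i, Matrix.toEuclideanLin ((B i)ᵀ * P i * B i + R i) (u i)⟫ ≤ 0 := by
    have : 0 ≤ (1 / C0) := by positivity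
    nlinarith
  have h7 : -(1 / C0) * ∑ i, ⟪u i, Matrix.toEuclideanLin ((B i)ᵀ * P i * A i) (x0 i)⟫
      ≤ (1 / C0) * (n * (Real.sqrt (C0 / ρ) * β * γ * δmax * (α * D))) := by
    have hc : 0 < (1 / C0) := by positivity
    calc -(1 / C0) * ∑ i, ⟪u i, Matrix.toEuclideanLin ((B i)ᵀ * P i * A i) (x0 i)⟫
        = (1 / C0) * (-∑ i, ⟪u i, Matrix.toEuclideanLin ((B i)ᵀ * P i * A i) (x0 i)⟫) := by ring
      _ ≤ (1 / C0) * (n * (Real.sqrt (C0 / ρ) * β * γ * δmax * (α * D))) := by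
          exact mul_le_mul_of_nonneg_left hS1 hc.le
  have heq : (1 / C0) * (n * (Real.sqrt (C0 / ρ) * β * γ * δmax * (α * D)))
      = ((n : ℝ) / Real.sqrt (C0 * ρ)) * β * γ * δmax * (α * D) := by
    have hh : (1 / C0) * Real.sqrt (C0 / ρ) = 1 / Real.sqrt (C0 * ρ) := by
      rw [← hkey]; ring
    calc (1 / C0) * (n * (Real.sqrt (C0 / ρ) * β * γ * δmax * (α * D)))
        = ((1 / C0) * Real.sqrt (C0 / ρ)) * (n * (β * γ * δmax * (α * D))) := by ring
      _ = (1 / Real.sqrt (C0 * ρ)) * (n * (β * γ * δmax * (α * D))) := by rw [hh]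
      _ = ((n : ℝ) / Real.sqrt (C0 * ρ)) * β * γ * δmax * (α * D) := by ring
  rw [← heq]
  linarith [h6, h7]
end
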